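/- arXiv:2303.15477 — 2 statements merged into one kernel-verified Lean document; each statement's English description precedes it below -/
import Mathlib

section
/- The composition cln = φ_ln ∘ 𝓛, where 𝓛: SPD(n) → Ch(n) is the Cholesky decomposition (S = 𝓛(S)·𝓛(S)ᵀ with 𝓛(S) lower triangular with positive diagonal) and φ_ln(L) = ⌊L⌋ + ln(𝔻(L)), is a bijection from SPD(n) onto the space of lower triangular n×n matrices. Consequently d(S₁,S₂) = ‖cln(S₁) − cln(S₂)‖_F is a metric on SPD(n) making it isometric to a Euclidean space. -/
/-- A matrix is lower triangular if all entries strictly above the diagonal vanish. -/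
def LowerTri {n : ℕ} (L : Matrix (Fin n) (Fin n) ℝ) : Prop :=
  ∀ i j, i < j → L i j = 0

/-- `φ_ln(L) = ⌊L⌋ + ln(𝔻(L))`. -/
noncomputable def cholPhiLn {n : ℕ} (L : Matrix (Fin n) (Fin n) ℝ) :
    Matrix (Fin n) (Fin n) ℝ :=
  Matrix.of fun i j => if i = j then Real.log (L i j) else L i j

/-- The Frobenius norm of a real matrix. -/
noncomputable def frobNorm {n : ℕ} (A : Matrix (Fin n) (Fin n) ℝ) : ℝ :=
  Real.sqrt (∑ i, ∑ j, (A i j) ^ 2)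

namespace CholAux

open Matrix

variable {n : ℕ}

lemma lowerTri_iff {L : Matrix (Fin n) (Fin n) ℝ} :
    LowerTri L ↔ L.BlockTriangular OrderDual.toDual :=
  ⟨fun h i j hij => h i j hij, fun h _ _ hij => h hij⟩

lemma isUnit_of_lowerTri {L : Matrix (Fin n) (Fin n) ℝ} (hL : LowerTri L)
    (hd : ∀ i, 0 < L i i) : IsUnit L := by
  rw [Matrix.isUnit_iff_isUnit_det,
    Matrix.det_of_lowerTriangular L (lowerTri_iff.mp hL)]
  exact (Finset.prod_pos fun i _ => hd i).ne'.isUnit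

lemma posDef_mul_transpose_self {L : Matrix (Fin n) (Fin n) ℝ} (hL : IsUnit L) :
    (L * Lᵀ).PosDef := by
  refine Matrix.PosDef.of_dotProduct_mulVec_pos ?_ fun x hx => ?_
  · simp [Matrix.IsHermitian, conjTranspose_eq_transpose_of_trivial, Matrix.transpose_mul]
  · have hLT : IsUnit Lᵀ := by
      rwa [Matrix.isUnit_iff_isUnit_det, Matrix.det_transpose, ← Matrix.isUnit_iff_isUnit_det]
    have hinj := Matrix.mulVec_injective_iff_isUnit.mpr hLT
    have hy : Lᵀ *ᵥ x ≠ 0 := fun h => hx (hinj (by simpa using h))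
    have : (star x) ⬝ᵥ ((L * Lᵀ) *ᵥ x) = star (Lᵀ *ᵥ x) ⬝ᵥ (Lᵀ *ᵥ x) := by
      simp only [star_trivial, ← Matrix.mulVec_mulVec, Matrix.dotProduct_mulVec,
        Matrix.mulVec_transpose]
    rw [this]
    exact Matrix.dotProduct_star_self_pos_iff.mpr hy

lemma posDef_conj' {m : Type*} [Fintype m] [DecidableEq m]
    {S B : Matrix m m ℝ} (hS : S.PosDef) (hB : IsUnit B) : (B * S * Bᵀ).PosDef := by
  refine Matrix.PosDef.of_dotProduct_mulVec_pos ?_ fun x hx => ?_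
  · have h1 := hS.1
    simp only [Matrix.IsHermitian, conjTranspose_eq_transpose_of_trivial] at h1 ⊢
    simp [Matrix.transpose_mul, Matrix.mul_assoc, h1]
  · have hBT : IsUnit Bᵀ := by
      rwa [Matrix.isUnit_iff_isUnit_det, Matrix.det_transpose, ← Matrix.isUnit_iff_isUnit_det]
    have hinj := Matrix.mulVec_injective_iff_isUnit.mpr hBT
    have hy : Bᵀ *ᵥ x ≠ 0 := fun h => hx (hinj (by simpa using h))
    have : (star x) ⬝ᵥ ((B * S * Bᵀ) *ᵥ x) = star (Bᵀ *ᵥ x) ⬝ᵥ (S *ᵥ (Bᵀ *ᵥ x)) := by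
      simp only [star_trivial, ← Matrix.mulVec_mulVec, Matrix.dotProduct_mulVec,
        Matrix.mulVec_transpose]
    rw [this]
    exact hS.dotProduct_mulVec_pos hy

/-- Uniqueness of the Cholesky factor. -/
lemma chol_unique {L₁ L₂ : Matrix (Fin n) (Fin n) ℝ}
    (h₁ : LowerTri L₁) (hd₁ : ∀ i, 0 < L₁ i i)
    (h₂ : LowerTri L₂) (hd₂ : ∀ i, 0 < L₂ i i)
    (h : L₁ * L₁ᵀ = L₂ * L₂ᵀ) : L₁ = L₂ := by
  have hu₂ := isUnit_of_lowerTri h₂ hd₂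
  haveI : Invertible L₂ := hu₂.invertible
  haveI : Invertible L₂ᵀ := Matrix.invertibleTranspose L₂
  set A := L₂⁻¹ * L₁ with hA
  have hL₂A : L₂ * A = L₁ := by
    rw [hA, Matrix.mul_inv_cancel_left_of_invertible]
  have hAlow : A.BlockTriangular OrderDual.toDual :=
    (Matrix.blockTriangular_inv_of_blockTriangular (lowerTri_iff.mp h₂)).mul
      (lowerTri_iff.mp h₁)
  have hAAt : A * Aᵀ = 1 := by
    have : A * Aᵀ = L₂⁻¹ * (L₂ * L₂ᵀ) * (L₂⁻¹)ᵀ := by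
      rw [hA, Matrix.transpose_mul, ← h]
      simp only [Matrix.mul_assoc]
    rw [this, Matrix.transpose_nonsing_inv]
    simp only [Matrix.mul_assoc, Matrix.mul_inv_of_invertible, Matrix.mul_one,
      Matrix.inv_mul_of_invertible]
  have hAinv : A⁻¹ = Aᵀ := Matrix.inv_eq_right_inv hAAt
  haveI : Invertible A := invertibleOfRightInverse A Aᵀ hAAt
  have hAinvlow : A⁻¹.BlockTriangular OrderDual.toDual :=
    Matrix.blockTriangular_inv_of_blockTriangular hAlow
  have hAoff : ∀ i j : Fin n, i ≠ j → A i j = 0 := by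
    intro i j hij
    rcases lt_or_gt_of_ne hij with hlt | hgt
    · exact hAlow hlt
    · have := hAinvlow (show (OrderDual.toDual i : (Fin n)ᵒᵈ) < OrderDual.toDual j from hgt)
      rw [hAinv, Matrix.transpose_apply] at this
      exact this
  have hdiagA : ∀ i, L₂ i i * A i i = L₁ i i := by
    intro i
    have hce : (L₂ * A) i i = L₁ i i := by rw [hL₂A]
    rw [Matrix.mul_apply] at hce
    rwa [Finset.sum_eq_single i (fun k _ hk => by rw [hAoff k i hk, mul_zero])
      (fun hi => absurd (Finset.mem_univ i) hi)] at hce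
  have hApos : ∀ i, 0 < A i i := by
    intro i
    have h1 := hdiagA i
    have h2 := hd₁ i
    have h3 := hd₂ i
    nlinarith
  have hAone : ∀ i, A i i = 1 := by
    intro i
    have hce : (A * Aᵀ) i i = (1 : Matrix (Fin n) (Fin n) ℝ) i i := by rw [hAAt]
    rw [Matrix.mul_apply, Matrix.one_apply_eq] at hce
    rw [Finset.sum_eq_single i (fun k _ hk => by
        rw [Matrix.transpose_apply, hAoff i k (Ne.symm hk), zero_mul])
      (fun hi => absurd (Finset.mem_univ i) hi), Matrix.transpose_apply] at hce
    have := hApos i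
    nlinarith
  have hA1 : A = 1 := by
    ext i j
    by_cases hij : i = j
    · subst hij; rw [hAone, Matrix.one_apply_eq]
    · rw [hAoff i j hij, Matrix.one_apply_ne hij]
  rw [← hL₂A, hA1, Matrix.mul_one]

/-- Existence of the Cholesky factor (over a general linearly ordered index type). -/
lemma chol_exists' {m : Type*} [Fintype m] [LinearOrder m] [WellFoundedLT m]
    [LocallyFiniteOrderBot m] {S : Matrix m m ℝ} (hS : S.PosDef) :
    ∃ L : Matrix m m ℝ, L.BlockTriangular OrderDual.toDual ∧ (∀ i, 0 < L i i) ∧ S = L * Lᵀ := by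
  set d : m → ℝ := LDL.diagEntries hS with hd
  have hdpos : ∀ i, 0 < d i := by
    have hdiagPD : (LDL.diag hS).PosDef := by
      rw [LDL.diag_eq_lowerInv_conj, conjTranspose_eq_transpose_of_trivial]
      exact posDef_conj' hS (isUnit_of_invertible _)
    rw [LDL.diag] at hdiagPD
    exact fun i => Matrix.posDef_diagonal_iff.mp hdiagPD i
  set L₀ := LDL.lower hS * Matrix.diagonal (fun i => Real.sqrt (d i)) with hL₀
  have hfact : S = L₀ * L₀ᵀ := by
    have : L₀ * L₀ᵀ = LDL.lower hS * LDL.diag hS * (LDL.lower hS)ᵀ := by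
      rw [hL₀, Matrix.transpose_mul, Matrix.diagonal_transpose, LDL.diag]
      have hss : (fun i => Real.sqrt (d i) * Real.sqrt (d i)) = d :=
        funext fun i => Real.mul_self_sqrt (hdpos i).le
      rw [Matrix.mul_assoc, ← Matrix.mul_assoc (Matrix.diagonal _),
        Matrix.diagonal_mul_diagonal, hss, ← hd, Matrix.mul_assoc]
    rw [this, ← conjTranspose_eq_transpose_of_trivial, LDL.lower_conj_diag]
  have hlow₀ : L₀.BlockTriangular OrderDual.toDual := by
    rw [hL₀]
    have h1 : (LDL.lowerInv hS).BlockTriangular OrderDual.toDual :=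
      fun i j hij => LDL.lowerInv_triangular hS hij
    exact ((Matrix.blockTriangular_inv_of_blockTriangular h1).mul
      (Matrix.blockTriangular_diagonal _))
  have hdet : ∀ i, L₀ i i ≠ 0 := by
    have hSdet := hS.det_pos
    have hdL : S.det = L₀.det * L₀.det := by
      rw [hfact, Matrix.det_mul, Matrix.det_transpose]
    have hL₀det : L₀.det ≠ 0 := by
      intro h0; rw [hdL, h0, mul_zero] at hSdet; exact lt_irrefl _ hSdet
    rw [Matrix.det_of_lowerTriangular L₀ hlow₀, Finset.prod_ne_zero_iff] at hL₀det
    exact fun i => hL₀det i (Finset.mem_univ i)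
  set e := fun i => if L₀ i i < 0 then (-1 : ℝ) else 1 with he
  refine ⟨L₀ * Matrix.diagonal e, ?_, ?_, ?_⟩
  · exact hlow₀.mul (Matrix.blockTriangular_diagonal _)
  · intro i
    rw [Matrix.mul_diagonal, he]
    rcases lt_trichotomy (L₀ i i) 0 with hlt | heq | hgt
    · simp only [if_pos hlt]; nlinarith
    · exact absurd heq (hdet i)
    · simp only [if_neg (not_lt.mpr hgt.le)]; nlinarith
  · have hEE : Matrix.diagonal e * (Matrix.diagonal e)ᵀ = 1 := by
      have h1 : (fun i => e i * e i) = fun _ => (1 : ℝ) := by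
        funext i
        rw [he]
        by_cases hlt : L₀ i i < 0 <;> simp [hlt]
      rw [Matrix.diagonal_transpose, Matrix.diagonal_mul_diagonal, h1, Matrix.diagonal_one]
    rw [Matrix.transpose_mul, Matrix.mul_assoc, ← Matrix.mul_assoc (Matrix.diagonal e),
      hEE, Matrix.one_mul, ← hfact]

lemma chol_exists {S : Matrix (Fin n) (Fin n) ℝ} (hS : S.PosDef) :
    ∃ L, LowerTri L ∧ (∀ i, 0 < L i i) ∧ S = L * Lᵀ := by
  obtain ⟨L, hlow, hdiag, hfact⟩ :=
    @chol_exists' (Fin n) _ _ (inferInstanceAs (WellFoundedLT (Fin n))) _ S hS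
  exact ⟨L, fun i j hij => hlow hij, hdiag, hfact⟩

/-- The Cholesky decomposition map. -/
noncomputable def cholMap (n : ℕ) (S : Matrix (Fin n) (Fin n) ℝ) :
    Matrix (Fin n) (Fin n) ℝ :=
  @dite _ S.PosDef (Classical.dec _) (fun h => (chol_exists h).choose) (fun _ => 0)

lemma cholMap_spec {S : Matrix (Fin n) (Fin n) ℝ} (hS : S.PosDef) :
    LowerTri (cholMap n S) ∧ (∀ i, 0 < cholMap n S i i) ∧
      S = cholMap n S * (cholMap n S)ᵀ := by
  rw [cholMap, dif_pos hS]
  exact (chol_exists hS).choose_spec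

lemma cholMap_mul_transpose {L : Matrix (Fin n) (Fin n) ℝ} (hL : LowerTri L)
    (hd : ∀ i, 0 < L i i) : cholMap n (L * Lᵀ) = L := by
  have hPD : (L * Lᵀ).PosDef := posDef_mul_transpose_self (isUnit_of_lowerTri hL hd)
  obtain ⟨h1, h2, h3⟩ := cholMap_spec hPD
  exact chol_unique h1 h2 hL hd h3.symm

lemma phi_inj {L₁ L₂ : Matrix (Fin n) (Fin n) ℝ} (hd₁ : ∀ i, 0 < L₁ i i)
    (hd₂ : ∀ i, 0 < L₂ i i) (h : cholPhiLn L₁ = cholPhiLn L₂) : L₁ = L₂ := by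
  ext i j
  have hij := congrFun (congrFun h i) j
  simp only [cholPhiLn, Matrix.of_apply] at hij
  by_cases hij' : i = j
  · subst hij'
    rw [if_pos rfl, if_pos rfl] at hij
    rw [← Real.exp_log (hd₁ i), hij, Real.exp_log (hd₂ i)]
  · rwa [if_neg hij', if_neg hij'] at hij

end CholAux

open Matrix in
/-- With `𝓛` the Cholesky decomposition (`S = 𝓛(S)·𝓛(S)ᵀ`, `𝓛(S)` lower triangular with
positive diagonal), the map `cln = φ_ln ∘ 𝓛` is a bijection from SPD(n) onto the lower
triangular matrices, and `d(S₁,S₂) = ‖cln S₁ − cln S₂‖_F` is a metric on SPD(n), making it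
isometric to a Euclidean space. -/
theorem log_cholesky_bijective_and_metric (n : ℕ) :
    ∃ chol : Matrix (Fin n) (Fin n) ℝ → Matrix (Fin n) (Fin n) ℝ,
      (∀ S : Matrix (Fin n) (Fin n) ℝ, S.PosDef →
        LowerTri (chol S) ∧ (∀ i, 0 < chol S i i) ∧ S = chol S * (chol S)ᵀ) ∧
      Set.BijOn (fun S => cholPhiLn (chol S)) {S : Matrix (Fin n) (Fin n) ℝ | S.PosDef}
        {X : Matrix (Fin n) (Fin n) ℝ | LowerTri X} ∧
      ∃ m : MetricSpace {S : Matrix (Fin n) (Fin n) ℝ // S.PosDef},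
        ∀ S₁ S₂ : {S : Matrix (Fin n) (Fin n) ℝ // S.PosDef},
          m.dist S₁ S₂ = frobNorm (cholPhiLn (chol (S₁ : Matrix (Fin n) (Fin n) ℝ)) -
            cholPhiLn (chol (S₂ : Matrix (Fin n) (Fin n) ℝ))) := by
  classical
  refine ⟨CholAux.cholMap n, fun S hS => CholAux.cholMap_spec hS, ?_, ?_⟩
  · refine ⟨?_, ?_, ?_⟩
    · intro S hS i j hij
      obtain ⟨h1, _, _⟩ := CholAux.cholMap_spec hS
      simp only [cholPhiLn, Matrix.of_apply, if_neg (ne_of_lt hij)]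
      exact h1 i j hij
    · intro S₁ hS₁ S₂ hS₂ h
      obtain ⟨_, hd₁, hf₁⟩ := CholAux.cholMap_spec hS₁
      obtain ⟨_, hd₂, hf₂⟩ := CholAux.cholMap_spec hS₂
      have hcc := CholAux.phi_inj hd₁ hd₂ h
      rw [hf₁, hf₂, hcc]
    · intro X hX
      set L := Matrix.of fun i j => if i = j then Real.exp (X i j) else X i j with hL
      have hlow : LowerTri L := fun i j hij => by
        rw [hL]; simp only [Matrix.of_apply, if_neg (ne_of_lt hij)]; exact hX i j hij
      have hd : ∀ i, 0 < L i i := fun i => by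
        rw [hL]; simp only [Matrix.of_apply, if_pos rfl]; exact Real.exp_pos _
      refine ⟨L * Lᵀ,
        CholAux.posDef_mul_transpose_self (CholAux.isUnit_of_lowerTri hlow hd), ?_⟩
      show cholPhiLn (CholAux.cholMap n (L * Lᵀ)) = X
      rw [CholAux.cholMap_mul_transpose hlow hd]
      ext i j
      by_cases hij : i = j
      · subst hij; simp [cholPhiLn, hL, Real.log_exp]
      · simp [cholPhiLn, hL, hij]
  · set f : {S : Matrix (Fin n) (Fin n) ℝ // S.PosDef} → EuclideanSpace ℝ (Fin n × Fin n) :=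
      fun S => WithLp.toLp 2 (fun p : Fin n × Fin n => cholPhiLn (CholAux.cholMap n S.1) p.1 p.2) with hf
    have hinj : Function.Injective f := by
      intro S₁ S₂ h
      obtain ⟨_, hd₁, hf₁⟩ := CholAux.cholMap_spec S₁.2
      obtain ⟨_, hd₂, hf₂⟩ := CholAux.cholMap_spec S₂.2
      have hmat : cholPhiLn (CholAux.cholMap n S₁.1) = cholPhiLn (CholAux.cholMap n S₂.1) := by
        ext i j; exact congrArg (fun v : EuclideanSpace ℝ (Fin n × Fin n) => v (i, j)) h
      have hcc := CholAux.phi_inj hd₁ hd₂ hmat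
      exact Subtype.ext (by rw [hf₁, hf₂, hcc])
    refine ⟨MetricSpace.induced f hinj (by infer_instance), fun S₁ S₂ => ?_⟩
    have hdd : (MetricSpace.induced f hinj (by infer_instance)).dist S₁ S₂
        = dist (f S₁) (f S₂) := rfl
    rw [hdd, EuclideanSpace.dist_eq, frobNorm, hf]
    congr 1
    rw [Fintype.sum_prod_type]
    refine Finset.sum_congr rfl fun i _ => Finset.sum_congr rfl fun j _ => ?_
    rw [Real.dist_eq, sq_abs, Matrix.sub_apply]
end

section
/- Define the group operation on SPD(n) transferred from Cholesky space: S₁ ⊙ S₂ = 𝓛⁻¹(⌊L₁⌋ + ⌊L₂⌋ + 𝔻(L₁)𝔻(L₂)) where Lᵢ = 𝓛(Sᵢ) are the Cholesky factors and 𝓛⁻¹(L) = LLᵀ. Then (SPD(n), ⊙) is an abelian group with identity the identity matrix. -/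
/-- The Cholesky-space group operation on lower triangular matrices:
`⌊L₁⌋ + ⌊L₂⌋ + 𝔻(L₁)𝔻(L₂)` (off-diagonal entries add, diagonal entries multiply). -/
def cholOp {n : ℕ} (L₁ L₂ : Matrix (Fin n) (Fin n) ℝ) : Matrix (Fin n) (Fin n) ℝ :=
  Matrix.of fun i j => if i = j then L₁ i i * L₂ j j else L₁ i j + L₂ i j

namespace LogChol

open Matrix

section General

variable {m : Type*} [Fintype m]

section Ord

variable [DecidableEq m] [LinearOrder m]

lemma det_lowerTri' {L : Matrix m m ℝ} (h : ∀ i j : m, i < j → L i j = 0) :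
    L.det = ∏ i, L i i :=
  Matrix.det_of_lowerTriangular L (fun i j hij => h i j hij)

lemma isUnit_lowerTri' {L : Matrix m m ℝ} (h : ∀ i j : m, i < j → L i j = 0)
    (hd : ∀ i, 0 < L i i) : IsUnit L := by
  rw [Matrix.isUnit_iff_isUnit_det, det_lowerTri' h, isUnit_iff_ne_zero]
  exact (Finset.prod_pos fun i _ => hd i).ne'

end Ord

lemma conj_posDef [DecidableEq m] {S : Matrix m m ℝ} (hS : S.PosDef)
    {W : Matrix m m ℝ} (hW : IsUnit W) : (W * S * Wᵀ).PosDef := by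
  have hWT : IsUnit Wᵀ := by
    rwa [Matrix.isUnit_iff_isUnit_det, Matrix.det_transpose, ← Matrix.isUnit_iff_isUnit_det]
  have hinj : Function.Injective (Wᵀ.mulVec) := Matrix.mulVec_injective_iff_isUnit.mpr hWT
  rw [Matrix.posDef_iff_dotProduct_mulVec]
  constructor
  · have := (hS.posSemidef.mul_mul_conjTranspose_same W).isHermitian
    rwa [Matrix.conjTranspose_eq_transpose_of_trivial] at this
  · intro x hx
    have hx' : Wᵀ *ᵥ x ≠ 0 := fun h0 => hx (hinj (by simpa using h0))
    have key : star x ⬝ᵥ ((W * S * Wᵀ) *ᵥ x) = star (Wᵀ *ᵥ x) ⬝ᵥ (S *ᵥ (Wᵀ *ᵥ x)) := by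
      rw [star_trivial, star_trivial, ← Matrix.mulVec_mulVec, ← Matrix.mulVec_mulVec,
        Matrix.dotProduct_mulVec, ← Matrix.mulVec_transpose]
    rw [key]
    exact hS.dotProduct_mulVec_pos hx'

lemma mul_transpose_posDef' [DecidableEq m] {L : Matrix m m ℝ}
    (hu : IsUnit L) : (L * Lᵀ).PosDef := by
  have := conj_posDef (Matrix.PosDef.one (n := m) (R := ℝ)) hu
  simpa using this

variable [LinearOrder m] [WellFoundedLT m] [LocallyFiniteOrderBot m]

/-- Existence of the Cholesky factor, built from the LDL decomposition
(with a sign correction on the diagonal). -/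
theorem exists_cholesky {S : Matrix m m ℝ} (hS : S.PosDef) :
    ∃ L : Matrix m m ℝ, (∀ i j : m, i < j → L i j = 0) ∧ (∀ i, 0 < L i i) ∧ S = L * Lᵀ := by
  haveI := LDL.invertibleLowerInv hS
  -- the LDL lower factor is lower triangular
  have hlow : ∀ i j : m, i < j → LDL.lower hS i j = 0 := by
    have h1 : (LDL.lowerInv hS).BlockTriangular OrderDual.toDual :=
      fun i j hij => LDL.lowerInv_triangular hS hij
    have h2 := Matrix.blockTriangular_inv_of_blockTriangular h1
    exact fun i j hij => h2 hij
  -- it is invertible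
  have hu : IsUnit (LDL.lower hS) := by
    rw [Matrix.isUnit_iff_isUnit_det, isUnit_iff_ne_zero]
    have hdetInv : IsUnit (LDL.lowerInv hS).det := Matrix.isUnit_det_of_invertible _
    rw [show LDL.lower hS = (LDL.lowerInv hS)⁻¹ from rfl, Matrix.det_nonsing_inv,
      Ring.inverse_eq_inv]
    exact inv_ne_zero hdetInv.ne_zero
  -- hence its diagonal entries are nonzero
  have hne : ∀ i, LDL.lower hS i i ≠ 0 := by
    intro i
    have hdet : (LDL.lower hS).det ≠ 0 := by
      rw [← isUnit_iff_ne_zero, ← Matrix.isUnit_iff_isUnit_det]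
      exact hu
    rw [det_lowerTri' hlow] at hdet
    exact Finset.prod_ne_zero_iff.mp hdet i (Finset.mem_univ i)
  -- diag entries of the LDL decomposition are positive
  have hdiagPD : (Matrix.diagonal (LDL.diagEntries hS)).PosDef := by
    have h' : Matrix.diagonal (LDL.diagEntries hS)
        = LDL.lowerInv hS * S * (LDL.lowerInv hS)ᵀ := by
      have := LDL.diag_eq_lowerInv_conj hS
      rwa [Matrix.conjTranspose_eq_transpose_of_trivial] at this
    rw [h']
    exact conj_posDef hS (isUnit_of_invertible _)
  have hdpos : ∀ i, 0 < LDL.diagEntries hS i := Matrix.posDef_diagonal_iff.mp hdiagPD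
  -- the sign-corrected square root of the diagonal
  set v : m → ℝ := fun i =>
    (if LDL.lower hS i i < 0 then (-1 : ℝ) else 1) * Real.sqrt (LDL.diagEntries hS i) with hv
  refine ⟨LDL.lower hS * Matrix.diagonal v, ?_, ?_, ?_⟩
  · intro i j hij
    rw [Matrix.mul_diagonal, hlow i j hij, zero_mul]
  · intro i
    rw [Matrix.mul_diagonal]
    have hs : 0 < Real.sqrt (LDL.diagEntries hS i) := Real.sqrt_pos.mpr (hdpos i)
    rw [hv]
    simp only
    rcases (hne i).lt_or_gt with h | h
    · rw [if_pos h]; nlinarith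
    · rw [if_neg (not_lt.mpr h.le)]; nlinarith
  · have hvi : ∀ i, v i * v i = LDL.diagEntries hS i := by
      intro i
      have hd := (hdpos i).le
      rw [hv]
      simp only
      split_ifs <;> ring_nf <;> rw [Real.sq_sqrt hd]
    have hvv : Matrix.diagonal v * Matrix.diagonal v = Matrix.diagonal (LDL.diagEntries hS) := by
      rw [Matrix.diagonal_mul_diagonal]
      exact congrArg Matrix.diagonal (funext hvi)
    have h := LDL.lower_conj_diag hS
    rw [Matrix.conjTranspose_eq_transpose_of_trivial] at h
    calc S = LDL.lower hS * Matrix.diagonal (LDL.diagEntries hS) * (LDL.lower hS)ᵀ := h.symm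
      _ = LDL.lower hS * Matrix.diagonal v * (LDL.lower hS * Matrix.diagonal v)ᵀ := by
          rw [Matrix.transpose_mul, Matrix.diagonal_transpose]
          rw [Matrix.mul_assoc, Matrix.mul_assoc, ← Matrix.mul_assoc (Matrix.diagonal v), hvv]

end General

variable {n : ℕ}

lemma mul_transpose_posDef {L : Matrix (Fin n) (Fin n) ℝ} (h : LowerTri L)
    (hd : ∀ i, 0 < L i i) : (L * Lᵀ).PosDef := by
  classical exact mul_transpose_posDef' (isUnit_lowerTri' h hd)

lemma chol_unique {L₁ L₂ : Matrix (Fin n) (Fin n) ℝ} (h₁ : LowerTri L₁) (hd₁ : ∀ i, 0 < L₁ i i)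
    (h₂ : LowerTri L₂) (hd₂ : ∀ i, 0 < L₂ i i) (hEq : L₁ * L₁ᵀ = L₂ * L₂ᵀ) : L₁ = L₂ := by
  suffices H : ∀ j i : Fin n, L₁ i j = L₂ i j by ext i j; exact H j i
  intro j
  induction j using WellFoundedLT.induction with
  | _ j ih =>
    have hent : ∀ i, (∑ k, L₁ i k * L₁ j k) = ∑ k, L₂ i k * L₂ j k := by
      intro i
      have := congrFun (congrFun hEq i) j
      simpa [Matrix.mul_apply, Matrix.transpose_apply] using this
    have herase : ∀ i, (∑ k ∈ Finset.univ.erase j, L₁ i k * L₁ j k)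
        = ∑ k ∈ Finset.univ.erase j, L₂ i k * L₂ j k := by
      intro i
      refine Finset.sum_congr rfl fun k hk => ?_
      rcases lt_or_gt_of_ne (Finset.ne_of_mem_erase hk) with hkj | hkj
      · rw [ih k hkj i, ih k hkj j]
      · rw [h₁ j k hkj, h₂ j k hkj, mul_zero, mul_zero]
    have hcancel : ∀ i, L₁ i j * L₁ j j = L₂ i j * L₂ j j := by
      intro i
      have h := hent i
      rw [← Finset.add_sum_erase _ (fun k => L₁ i k * L₁ j k) (Finset.mem_univ j),
        ← Finset.add_sum_erase _ (fun k => L₂ i k * L₂ j k) (Finset.mem_univ j),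
        herase i] at h
      exact add_right_cancel h
    have hjj : L₁ j j = L₂ j j := (mul_self_inj (hd₁ j).le (hd₂ j).le).mp (hcancel j)
    intro i
    rcases lt_trichotomy i j with hij | rfl | hij
    · rw [h₁ i j hij, h₂ i j hij]
    · exact hjj
    · have h' := hcancel i
      rw [hjj] at h'
      exact mul_right_cancel₀ (hd₂ j).ne' h'

lemma cholEx {S : Matrix (Fin n) (Fin n) ℝ} (hS : S.PosDef) :
    ∃ L : Matrix (Fin n) (Fin n) ℝ, LowerTri L ∧ (∀ i, 0 < L i i) ∧ S = L * Lᵀ :=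
  @exists_cholesky (Fin n) _ (inferInstance : LinearOrder (Fin n))
    (inferInstance : WellFoundedLT (Fin n)) (inferInstance : LocallyFiniteOrderBot (Fin n)) S hS

open Classical in
/-- The (total) Cholesky map, via choice. -/
noncomputable def chol (n : ℕ) : Matrix (Fin n) (Fin n) ℝ → Matrix (Fin n) (Fin n) ℝ :=
  fun S => if h : S.PosDef then Classical.choose (cholEx h) else 0

lemma chol_spec {S : Matrix (Fin n) (Fin n) ℝ} (hS : S.PosDef) :
    LowerTri (chol n S) ∧ (∀ i, 0 < chol n S i i) ∧ S = chol n S * (chol n S)ᵀ := by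
  simp only [chol, dif_pos hS]
  obtain ⟨h1, h2, h3⟩ := Classical.choose_spec (cholEx hS)
  exact ⟨h1, h2, h3⟩

lemma chol_mul_transpose {L : Matrix (Fin n) (Fin n) ℝ} (h : LowerTri L) (hd : ∀ i, 0 < L i i) :
    chol n (L * Lᵀ) = L := by
  have hP := mul_transpose_posDef h hd
  obtain ⟨h1, h2, h3⟩ := chol_spec hP
  exact chol_unique h1 h2 h hd h3.symm

lemma chol_one : chol n (1 : Matrix (Fin n) (Fin n) ℝ) = 1 := by
  have h1 : LowerTri (1 : Matrix (Fin n) (Fin n) ℝ) :=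
    fun i j hij => Matrix.one_apply_ne hij.ne
  have hd : ∀ i, (0:ℝ) < (1 : Matrix (Fin n) (Fin n) ℝ) i i := fun i => by simp
  have := chol_mul_transpose h1 hd
  simpa using this

lemma cholOp_lowerTri {A B : Matrix (Fin n) (Fin n) ℝ} (hA : LowerTri A) (hB : LowerTri B) :
    LowerTri (cholOp A B) := fun i j hij => by
  simp [cholOp, hij.ne, hA i j hij, hB i j hij]

lemma cholOp_diag_pos {A B : Matrix (Fin n) (Fin n) ℝ} (hA : ∀ i, 0 < A i i)
    (hB : ∀ i, 0 < B i i) : ∀ i, 0 < cholOp A B i i := fun i => by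
  simpa [cholOp] using mul_pos (hA i) (hB i)

lemma cholOp_assoc (A B C : Matrix (Fin n) (Fin n) ℝ) :
    cholOp (cholOp A B) C = cholOp A (cholOp B C) := by
  ext i j
  by_cases h : i = j
  · subst h; simp [cholOp, mul_assoc]
  · simp [cholOp, h, add_assoc]

lemma cholOp_comm (A B : Matrix (Fin n) (Fin n) ℝ) : cholOp A B = cholOp B A := by
  ext i j
  by_cases h : i = j
  · subst h; simp [cholOp, mul_comm]
  · simp [cholOp, h, add_comm]

lemma cholOp_one_left (A : Matrix (Fin n) (Fin n) ℝ) : cholOp 1 A = A := by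
  ext i j
  by_cases h : i = j
  · subst h; simp [cholOp, Matrix.one_apply]
  · simp [cholOp, h, Matrix.one_apply_ne h]

/-- Inverse in Cholesky space. -/
noncomputable def invChol (A : Matrix (Fin n) (Fin n) ℝ) : Matrix (Fin n) (Fin n) ℝ :=
  Matrix.of fun i j => if i = j then (A i i)⁻¹ else -A i j

lemma invChol_lowerTri {A : Matrix (Fin n) (Fin n) ℝ} (hA : LowerTri A) :
    LowerTri (invChol A) := fun i j hij => by
  simp [invChol, hij.ne, hA i j hij]

lemma invChol_diag_pos {A : Matrix (Fin n) (Fin n) ℝ} (hd : ∀ i, 0 < A i i) :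
    ∀ i, 0 < invChol A i i := fun i => by
  simpa [invChol] using inv_pos.mpr (hd i)

lemma cholOp_invChol {A : Matrix (Fin n) (Fin n) ℝ} (hd : ∀ i, 0 < A i i) :
    cholOp (invChol A) A = 1 := by
  ext i j
  by_cases h : i = j
  · subst h
    simp [cholOp, invChol, Matrix.one_apply, inv_mul_cancel₀ (hd i).ne']
  · simp [cholOp, invChol, h, Matrix.one_apply_ne h]

/-- The group multiplication on SPD matrices. -/
noncomputable def spdMul (S₁ S₂ : {S : Matrix (Fin n) (Fin n) ℝ // S.PosDef}) :
    {S : Matrix (Fin n) (Fin n) ℝ // S.PosDef} :=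
  ⟨cholOp (chol n S₁.1) (chol n S₂.1) * (cholOp (chol n S₁.1) (chol n S₂.1))ᵀ,
   mul_transpose_posDef (cholOp_lowerTri (chol_spec S₁.2).1 (chol_spec S₂.2).1)
     (cholOp_diag_pos (chol_spec S₁.2).2.1 (chol_spec S₂.2).2.1)⟩

noncomputable def spdOne : {S : Matrix (Fin n) (Fin n) ℝ // S.PosDef} :=
  ⟨1, Matrix.PosDef.one⟩

noncomputable def spdInv (S : {S : Matrix (Fin n) (Fin n) ℝ // S.PosDef}) :
    {S : Matrix (Fin n) (Fin n) ℝ // S.PosDef} :=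
  ⟨invChol (chol n S.1) * (invChol (chol n S.1))ᵀ,
   mul_transpose_posDef (invChol_lowerTri (chol_spec S.2).1)
     (invChol_diag_pos (chol_spec S.2).2.1)⟩

lemma spdMul_val (a b : {S : Matrix (Fin n) (Fin n) ℝ // S.PosDef}) :
    (spdMul a b).1 = cholOp (chol n a.1) (chol n b.1) * (cholOp (chol n a.1) (chol n b.1))ᵀ :=
  rfl

lemma chol_spdMul (a b : {S : Matrix (Fin n) (Fin n) ℝ // S.PosDef}) :
    chol n (cholOp (chol n a.1) (chol n b.1) * (cholOp (chol n a.1) (chol n b.1))ᵀ)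
      = cholOp (chol n a.1) (chol n b.1) :=
  chol_mul_transpose (cholOp_lowerTri (chol_spec a.2).1 (chol_spec b.2).1)
    (cholOp_diag_pos (chol_spec a.2).2.1 (chol_spec b.2).2.1)

lemma chol_spdInv (a : {S : Matrix (Fin n) (Fin n) ℝ // S.PosDef}) :
    chol n (spdInv a).1 = invChol (chol n a.1) :=
  chol_mul_transpose (invChol_lowerTri (chol_spec a.2).1)
    (invChol_diag_pos (chol_spec a.2).2.1)

/-- The abelian group structure on SPD matrices. -/
noncomputable def spdGroup (n : ℕ) : CommGroup {S : Matrix (Fin n) (Fin n) ℝ // S.PosDef} where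
  mul := spdMul
  one := spdOne
  inv := spdInv
  mul_assoc a b c := Subtype.ext <| by
    show (spdMul (spdMul a b) c).1 = (spdMul a (spdMul b c)).1
    simp only [spdMul_val, chol_spdMul, cholOp_assoc]
  one_mul a := Subtype.ext <| by
    show (spdMul spdOne a).1 = a.1
    have h1 : (spdOne (n := n)).1 = 1 := rfl
    simp only [spdMul_val, h1, chol_one, cholOp_one_left]
    exact ((chol_spec a.2).2.2).symm
  mul_one a := Subtype.ext <| by
    show (spdMul a spdOne).1 = a.1
    have h1 : (spdOne (n := n)).1 = 1 := rfl
    simp only [spdMul_val, h1, chol_one, cholOp_comm _ (1 : Matrix (Fin n) (Fin n) ℝ),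
      cholOp_one_left]
    exact ((chol_spec a.2).2.2).symm
  inv_mul_cancel a := Subtype.ext <| by
    show (spdMul (spdInv a) a).1 = (spdOne (n := n)).1
    rw [spdMul_val, chol_spdInv, cholOp_invChol (chol_spec a.2).2.1]
    show (1 : Matrix (Fin n) (Fin n) ℝ) * (1 : Matrix (Fin n) (Fin n) ℝ)ᵀ = 1
    simp
  mul_comm a b := Subtype.ext <| by
    show (spdMul a b).1 = (spdMul b a).1
    simp only [spdMul_val, cholOp_comm (chol n a.1)]

end LogChol

open Matrix in
/-- The operation `S₁ ⊙ S₂ = 𝓛⁻¹(⌊L₁⌋ + ⌊L₂⌋ + 𝔻(L₁)𝔻(L₂))` transferred from Cholesky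
space (`Lᵢ = 𝓛(Sᵢ)` the Cholesky factors, `𝓛⁻¹(L) = LLᵀ`) makes SPD(n) an abelian group
with identity the identity matrix. -/
theorem log_cholesky_group (n : ℕ) :
    ∃ chol : Matrix (Fin n) (Fin n) ℝ → Matrix (Fin n) (Fin n) ℝ,
      (∀ S : Matrix (Fin n) (Fin n) ℝ, S.PosDef →
        LowerTri (chol S) ∧ (∀ i, 0 < chol S i i) ∧ S = chol S * (chol S)ᵀ) ∧
      ∃ G : CommGroup {S : Matrix (Fin n) (Fin n) ℝ // S.PosDef},
        (∀ S₁ S₂ : {S : Matrix (Fin n) (Fin n) ℝ // S.PosDef},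
          ((G.mul S₁ S₂ : {S : Matrix (Fin n) (Fin n) ℝ // S.PosDef}) :
              Matrix (Fin n) (Fin n) ℝ) =
            cholOp (chol (S₁ : Matrix (Fin n) (Fin n) ℝ))
                (chol (S₂ : Matrix (Fin n) (Fin n) ℝ)) *
              (cholOp (chol (S₁ : Matrix (Fin n) (Fin n) ℝ))
                (chol (S₂ : Matrix (Fin n) (Fin n) ℝ)))ᵀ) ∧
        ((G.one : Matrix (Fin n) (Fin n) ℝ) = 1) := by
  exact ⟨LogChol.chol n, fun S hS => LogChol.chol_spec hS, LogChol.spdGroup n,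
    fun S₁ S₂ => rfl, rfl⟩
end
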